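/- Let ρ : B_n → GL(V) be a finite-dimensional representation of the braid group and γ = σ_1⋯σ_{n-1}. If ρ(γ^{2n}) = c·Id for a nonzero scalar c, then setting ρ(τ) = c^{-1/(2n)}·ρ(γ) and ρ(σ_n) = ρ(γ)ρ(σ_{n-1})ρ(γ)^{-1} extends ρ to a representation of NB_n, i.e. the assigned matrices satisfy all defining relations (B1),(B2),(N1),(N2) of NB_n. -/

import Mathlib

section Aux

variable {M : Type*} [Monoid M]

/-- A product of `a j` over an interval commutes with `a k` provided each factor does. -/
lemma braid_aux_commL (a : ℕ → M) (k : ℕ) :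
    ∀ m s, (∀ j, s ≤ j → j < s + m → a j * a k = a k * a j) →
      (((List.range' s m).map a).prod) * a k = a k * (((List.range' s m).map a).prod) := by
  intro m
  induction m with
  | zero => intro s _; simp
  | succ m ih =>
    intro s h
    rw [List.range'_succ, List.map_cons, List.prod_cons]
    have h1 : a s * a k = a k * a s := h s le_rfl (by omega)
    have h2 := ih (s + 1) (fun j hj hj' => h j (by omega) (by omega))
    rw [mul_assoc, h2, ← mul_assoc, h1, mul_assoc]

end Aux

/-- Lemma 2.2 of the paper: if `ρ : B_n → GL(V)` is a representation
(given here by the images `a 1, …, a (n-1)` of the braid generators, satisfying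
the braid relations) with `ρ(γ)^{2n} = c·Id` for a nonzero scalar `c`, where
`γ = σ_1⋯σ_{n-1}`, then setting `ρ(τ) = c^{-1/(2n)}·ρ(γ)` (where `d` is a chosen
`2n`-th root of `c⁻¹`) and `ρ(σ_n) = ρ(γ)ρ(σ_{n-1})ρ(γ)⁻¹` yields operators
satisfying all the defining relations (B1), (B2), (N1), (N2) of `NB_n`.
Here `b i` encodes `ρ(σ_{i+1})` for `i : Fin n` (indices mod `n`). -/
theorem extension_of_braid_rep (n : ℕ) (hn : 3 ≤ n) [NeZero n]
    {V : Type*} [AddCommGroup V] [Module ℂ V]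
    (a : ℕ → Module.End ℂ V)
    (hbraid : ∀ i : ℕ, 1 ≤ i → i + 2 ≤ n →
      a i * a (i + 1) * a i = a (i + 1) * a i * a (i + 1))
    (hcomm : ∀ i j : ℕ, 1 ≤ i → j ≤ n - 1 → i + 1 < j → a i * a j = a j * a i)
    (γ γ' : Module.End ℂ V)
    (hγ : γ = ((List.range (n - 1)).map (fun i => a (i + 1))).prod)
    (hγγ' : γ * γ' = 1) (hγ'γ : γ' * γ = 1)
    (c d : ℂ) (hc : c ≠ 0)
    (hγc : γ ^ (2 * n) = c • (1 : Module.End ℂ V))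
    (hd : d ^ (2 * n) = c⁻¹) :
    let τ : Module.End ℂ V := d • γ
    let b : Fin n → Module.End ℂ V :=
      fun i => if (i : ℕ) + 1 = n then γ * a (n - 1) * γ' else a ((i : ℕ) + 1)
    (∀ i : Fin n, b i * b (i + 1) * b i = b (i + 1) * b i * b (i + 1)) ∧
    (∀ i j : Fin n, i - j ≠ 1 → j - i ≠ 1 → b i * b j = b j * b i) ∧
    (∀ i : Fin n, τ * b i = b (i + 1) * τ) ∧
    τ ^ (2 * n) = 1 := by
  intro τ b
  have hbdef : ∀ i : Fin n,
      b i = if (i : ℕ) + 1 = n then γ * a (n - 1) * γ' else a ((i : ℕ) + 1) := fun _ => rfl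
  have hτdef : τ = d • γ := rfl
  -- notation for products of consecutive generators
  set L : ℕ → ℕ → Module.End ℂ V := fun s m => ((List.range' s m).map a).prod with hL
  have hLsucc : ∀ s m, L s (m + 1) = a s * L (s + 1) m := by
    intro s m
    simp only [hL, List.range'_succ, List.map_cons, List.prod_cons]
  have hLapp : ∀ s m k, L s (m + k) = L s m * L (s + m) k := by
    intro s m k
    simp only [hL]
    rw [← List.range'_append_1, List.map_append, List.prod_append]
  have hL1 : ∀ s, L s 1 = a s := by
    intro s
    simp [hL]
  have hγL : γ = L 1 (n - 1) := by
    rw [hγ]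
    simp only [hL, List.range'_eq_map_range, List.map_map]
    congr 1
    apply List.map_congr_left
    intro x _
    show a (x + 1) = a (1 + x)
    rw [Nat.add_comm]
  -- cancellation of γ on the right
  have hcancel : ∀ x y : Module.End ℂ V, x * γ = y * γ → x = y := by
    intro x y h
    have := congrArg (· * γ') h
    simpa [mul_assoc, hγγ'] using this
  -- the shift relation γ aᵢ = aᵢ₊₁ γ for 1 ≤ i ≤ n-2
  have hshiftN : ∀ i : ℕ, 1 ≤ i → i + 2 ≤ n → γ * a i = a (i + 1) * γ := by
    intro i h1 h2
    obtain ⟨p, hp⟩ : ∃ p, i - 1 = p := ⟨i - 1, rfl⟩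
    obtain ⟨m, hm⟩ : ∃ m, n - i - 2 = m := ⟨n - i - 2, rfl⟩
    have e1 : n - 1 = p + (m + 1 + 1) := by omega
    have e2 : 1 + p = i := by omega
    have hdec : γ = L 1 p * (a i * (a (i + 1) * L (i + 2) m)) := by
      rw [hγL, e1, hLapp, e2, hLsucc, hLsucc]
    -- tail commutes with a i
    have htail : L (i + 2) m * a i = a i * L (i + 2) m := by
      apply braid_aux_commL
      intro j hj hj'
      exact (hcomm i j h1 (by omega) (by omega)).symm
    -- prefix commutes with a (i+1)
    have hpre : L 1 p * a (i + 1) = a (i + 1) * L 1 p := by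
      apply braid_aux_commL
      intro j hj hj'
      exact hcomm j (i + 1) hj (by omega) (by omega)
    have hb := hbraid i h1 h2
    calc γ * a i
        = (L 1 p * (a i * (a (i + 1) * L (i + 2) m))) * a i := by rw [hdec]
      _ = L 1 p * (a i * (a (i + 1) * (L (i + 2) m * a i))) := by simp only [mul_assoc]
      _ = L 1 p * (a i * (a (i + 1) * (a i * L (i + 2) m))) := by rw [htail]
      _ = L 1 p * (a i * a (i + 1) * a i * L (i + 2) m) := by simp only [mul_assoc]
      _ = L 1 p * (a (i + 1) * a i * a (i + 1) * L (i + 2) m) := by rw [hb]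
      _ = (L 1 p * a (i + 1)) * (a i * (a (i + 1) * L (i + 2) m)) := by
          simp only [mul_assoc]
      _ = (a (i + 1) * L 1 p) * (a i * (a (i + 1) * L (i + 2) m)) := by rw [hpre]
      _ = a (i + 1) * (L 1 p * (a i * (a (i + 1) * L (i + 2) m))) := by
          simp only [mul_assoc]
      _ = a (i + 1) * γ := by rw [← hdec]
  -- the key identity (centrality step): γ² a_{n-1} = a₁ γ²
  have hP : ∀ k s : ℕ, 1 ≤ s → s + k = n - 2 →
      L (s + 1) (n - s - 1) * a s * L (s + 1) (n - s - 1) * a (n - 1)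
        = a s * L (s + 1) (n - s - 1) * a s * L (s + 1) (n - s - 1) := by
    intro k
    induction k with
    | zero =>
      intro s h1 h2
      have hs : s = n - 2 := by omega
      subst hs
      rw [show n - (n - 2) - 1 = 1 by omega, hL1, show n - 2 + 1 = n - 1 by omega]
      have hb := hbraid (n - 2) (by omega) (by omega)
      rw [show n - 2 + 1 = n - 1 by omega] at hb
      calc a (n-1) * a (n-2) * a (n-1) * a (n-1)
          = (a (n-2) * a (n-1) * a (n-2)) * a (n-1) := by rw [hb]
        _ = a (n-2) * a (n-1) * a (n-2) * a (n-1) := by simp only [mul_assoc]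
    | succ k ih =>
      intro s h1 h2
      obtain ⟨m, hm⟩ : ∃ m, n - s - 2 = m := ⟨n - s - 2, rfl⟩
      have ih' := ih (s + 1) (by omega) (by omega)
      rw [show n - (s + 1) - 1 = m by omega] at ih'
      rw [show n - s - 1 = m + 1 by omega]
      have hsplit : L (s + 1) (m + 1) = a (s + 1) * L (s + 2) m := by
        rw [hLsucc, show s + 1 + 1 = s + 2 from rfl]
      have hcm : L (s + 2) m * a s = a s * L (s + 2) m := by
        apply braid_aux_commL
        intro j hj hj'
        exact (hcomm s j h1 (by omega) (by omega)).symm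
      have hb := hbraid s h1 (by omega)
      set E := L (s + 2) m with hE
      calc L (s + 1) (m + 1) * a s * L (s + 1) (m + 1) * a (n - 1)
          = (a (s+1) * E) * a s * ((a (s+1) * E) * a (n - 1)) := by
            rw [hsplit]; simp only [mul_assoc]
        _ = a (s+1) * ((E * a s) * (a (s+1) * (E * a (n - 1)))) := by
            simp only [mul_assoc]
        _ = a (s+1) * ((a s * E) * (a (s+1) * (E * a (n - 1)))) := by rw [hcm]
        _ = a (s+1) * a s * (E * a (s+1) * E * a (n - 1)) := by simp only [mul_assoc]
        _ = a (s+1) * a s * (a (s+1) * E * a (s+1) * E) := by rw [ih']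
        _ = (a (s+1) * a s * a (s+1)) * (E * (a (s+1) * E)) := by simp only [mul_assoc]
        _ = (a s * a (s+1) * a s) * (E * (a (s+1) * E)) := by rw [← hb]
        _ = (a s * a (s+1)) * ((a s * E) * (a (s+1) * E)) := by simp only [mul_assoc]
        _ = (a s * a (s+1)) * ((E * a s) * (a (s+1) * E)) := by rw [hcm]
        _ = a s * (a (s+1) * E) * a s * (a (s+1) * E) := by simp only [mul_assoc]
        _ = a s * L (s + 1) (m + 1) * a s * L (s + 1) (m + 1) := by rw [hsplit]
  have hL2 : γ * γ * a (n - 1) = a 1 * (γ * γ) := by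
    have hsplit : γ = a 1 * L 2 (n - 2) := by
      rw [hγL, show n - 1 = (n - 2) + 1 by omega, hLsucc]
    have hp := hP (n - 3) 1 le_rfl (by omega)
    rw [show (1:ℕ) + 1 = 2 from rfl, show n - 1 - 1 = n - 2 by omega] at hp
    rw [hsplit]
    calc (a 1 * L 2 (n-2)) * (a 1 * L 2 (n-2)) * a (n - 1)
        = a 1 * (L 2 (n-2) * a 1 * L 2 (n-2) * a (n - 1)) := by simp only [mul_assoc]
      _ = a 1 * (a 1 * L 2 (n-2) * a 1 * L 2 (n-2)) := by rw [hp]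
      _ = a 1 * ((a 1 * L 2 (n-2)) * (a 1 * L 2 (n-2))) := by simp only [mul_assoc]
  -- value computations for Fin arithmetic
  have hone : (1 : Fin n).val = 1 := by rw [Fin.val_one']; exact Nat.mod_eq_of_lt (by omega)
  have hvadd : ∀ i : Fin n, (i : ℕ) + 1 < n → ((i + 1 : Fin n) : ℕ) = (i : ℕ) + 1 := by
    intro i h
    rw [Fin.val_add, hone, Nat.mod_eq_of_lt (by omega)]
  have hvlast : ∀ i : Fin n, (i : ℕ) + 1 = n → ((i + 1 : Fin n) : ℕ) = 0 := by
    intro i h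
    rw [Fin.val_add, hone, h, Nat.mod_self]
  -- the fundamental shift for b : γ * b i = b (i+1) * γ
  have hshiftb : ∀ i : Fin n, γ * b i = b (i + 1) * γ := by
    intro i
    by_cases h : (i : ℕ) + 1 = n
    · -- i is the last index
      rw [hbdef i, hbdef (i + 1), if_pos h, hvlast i h, if_neg (by omega)]
      rw [show (0:ℕ) + 1 = 1 from rfl]
      calc γ * (γ * a (n - 1) * γ') = (γ * γ * a (n - 1)) * γ' := by
            simp only [mul_assoc]
        _ = (a 1 * (γ * γ)) * γ' := by rw [hL2]
        _ = a 1 * (γ * (γ * γ')) := by simp only [mul_assoc]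
        _ = a 1 * (γ * 1) := by rw [hγγ']
        _ = a 1 * γ := by rw [mul_one]
    · have h' : (i : ℕ) + 1 < n := by have := i.isLt; omega
      rw [hbdef i, hbdef (i + 1), if_neg h, hvadd i h']
      by_cases h2 : (i : ℕ) + 1 + 1 = n
      · rw [if_pos h2]
        have e : (i : ℕ) + 1 = n - 1 := by omega
        rw [e, mul_assoc (γ * a (n - 1)) γ' γ, hγ'γ, mul_one]
      · rw [if_neg h2]
        exact hshiftN ((i : ℕ) + 1) (by omega) (by omega)
  -- transfer steps
  have stepB1 : ∀ i : Fin n,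
      b i * b (i + 1) * b i = b (i + 1) * b i * b (i + 1) →
      b (i + 1) * b (i + 1 + 1) * b (i + 1) = b (i + 1 + 1) * b (i + 1) * b (i + 1 + 1) := by
    intro i h
    apply hcancel
    calc b (i+1) * b (i+1+1) * b (i+1) * γ
        = b (i+1) * (b (i+1+1) * (b (i+1) * γ)) := by simp only [mul_assoc]
      _ = b (i+1) * (b (i+1+1) * (γ * b i)) := by rw [hshiftb i]
      _ = b (i+1) * ((b (i+1+1) * γ) * b i) := by simp only [mul_assoc]
      _ = b (i+1) * ((γ * b (i+1)) * b i) := by rw [hshiftb (i+1)]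
      _ = (b (i+1) * γ) * (b (i+1) * b i) := by simp only [mul_assoc]
      _ = (γ * b i) * (b (i+1) * b i) := by rw [hshiftb i]
      _ = γ * (b i * b (i+1) * b i) := by simp only [mul_assoc]
      _ = γ * (b (i+1) * b i * b (i+1)) := by rw [h]
      _ = (γ * b (i+1)) * (b i * b (i+1)) := by simp only [mul_assoc]
      _ = (b (i+1+1) * γ) * (b i * b (i+1)) := by rw [hshiftb (i+1)]
      _ = b (i+1+1) * ((γ * b i) * b (i+1)) := by simp only [mul_assoc]
      _ = b (i+1+1) * ((b (i+1) * γ) * b (i+1)) := by rw [hshiftb i]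
      _ = b (i+1+1) * b (i+1) * (γ * b (i+1)) := by simp only [mul_assoc]
      _ = b (i+1+1) * b (i+1) * (b (i+1+1) * γ) := by rw [hshiftb (i+1)]
      _ = b (i+1+1) * b (i+1) * b (i+1+1) * γ := by simp only [mul_assoc]
  have stepB2 : ∀ i j : Fin n, b i * b j = b j * b i →
      b (i + 1) * b (j + 1) = b (j + 1) * b (i + 1) := by
    intro i j h
    apply hcancel
    calc b (i+1) * b (j+1) * γ = b (i+1) * (b (j+1) * γ) := by simp only [mul_assoc]
      _ = b (i+1) * (γ * b j) := by rw [hshiftb j]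
      _ = (b (i+1) * γ) * b j := by simp only [mul_assoc]
      _ = (γ * b i) * b j := by rw [hshiftb i]
      _ = γ * (b i * b j) := by simp only [mul_assoc]
      _ = γ * (b j * b i) := by rw [h]
      _ = (γ * b j) * b i := by simp only [mul_assoc]
      _ = (b (j+1) * γ) * b i := by rw [hshiftb j]
      _ = b (j+1) * (γ * b i) := by simp only [mul_assoc]
      _ = b (j+1) * (b (i+1) * γ) := by rw [hshiftb i]
      _ = b (j+1) * b (i+1) * γ := by simp only [mul_assoc]
  -- base cases over plain generators
  have baseB1 : ∀ i : Fin n, (i : ℕ) + 3 ≤ n →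
      b i * b (i + 1) * b i = b (i + 1) * b i * b (i + 1) := by
    intro i h
    rw [hbdef i, hbdef (i + 1), if_neg (by omega), hvadd i (by omega), if_neg (by omega)]
    exact hbraid ((i : ℕ) + 1) (by omega) (by omega)
  have baseB2 : ∀ i j : Fin n, (i : ℕ) + 1 < n → (j : ℕ) + 1 < n →
      (i : ℕ) ≠ (j : ℕ) + 1 → (j : ℕ) ≠ (i : ℕ) + 1 → b i * b j = b j * b i := by
    intro i j hi hj hij hji
    rw [hbdef i, hbdef j, if_neg (by omega), if_neg (by omega)]
    rcases lt_trichotomy (i : ℕ) (j : ℕ) with h | h | h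
    · exact hcomm ((i : ℕ) + 1) ((j : ℕ) + 1) (by omega) (by omega) (by omega)
    · rw [h]
    · exact (hcomm ((j : ℕ) + 1) ((i : ℕ) + 1) (by omega) (by omega) (by omega)).symm
  -- full (B1)
  have B1 : ∀ i : Fin n, b i * b (i + 1) * b i = b (i + 1) * b i * b (i + 1) := by
    intro i
    by_cases h1 : (i : ℕ) + 3 ≤ n
    · exact baseB1 i h1
    · by_cases h2 : (i : ℕ) = n - 2
      · have hji : (⟨n - 3, by omega⟩ : Fin n) + 1 = i := by
          apply Fin.ext
          rw [Fin.val_add, hone, Fin.val_mk, Nat.mod_eq_of_lt (by omega)]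
          omega
        rw [← hji]
        exact stepB1 _ (baseB1 _ (by show n - 3 + 3 ≤ n; omega))
      · have h3 : (i : ℕ) = n - 1 := by have := i.isLt; omega
        have e1 : (((⟨n - 3, by omega⟩ : Fin n) + 1 : Fin n) : ℕ) = n - 2 := by
          rw [Fin.val_add, hone, Fin.val_mk, Nat.mod_eq_of_lt (by omega)]; omega
        have hji : (⟨n - 3, by omega⟩ : Fin n) + 1 + 1 = i := by
          apply Fin.ext
          rw [Fin.val_add, hone, e1, Nat.mod_eq_of_lt (by omega)]
          omega
        rw [← hji]
        exact stepB1 _ (stepB1 _ (baseB1 _ (by show n - 3 + 3 ≤ n; omega)))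
  -- full (B2)
  have mainB2 : ∀ i j : Fin n, (i : ℕ) = n - 1 → (j : ℕ) + 1 < n →
      i - j ≠ 1 → j - i ≠ 1 → b i * b j = b j * b i := by
    intro i j hi hj hij hji
    have hj0 : (j : ℕ) ≠ 0 := by
      intro h0
      apply hji
      have hj' : j = 0 := Fin.ext (by simpa using h0)
      have hi1 : i + 1 = 0 := by
        apply Fin.ext
        rw [Fin.val_add, hone, hi, Fin.val_zero, show n - 1 + 1 = n by omega, Nat.mod_self]
      rw [hj', zero_sub]
      exact neg_eq_of_add_eq_zero_left (by rw [add_comm]; exact hi1)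
    have hjn2 : (j : ℕ) ≠ n - 2 := by
      intro h0
      apply hij
      have hji' : j + 1 = i := by
        apply Fin.ext
        rw [Fin.val_add, hone, h0, hi, Nat.mod_eq_of_lt (by omega)]
        omega
      rw [← hji', add_sub_cancel_left]
    have e1 : (⟨n - 2, by omega⟩ : Fin n) + 1 = i := by
      apply Fin.ext
      rw [Fin.val_add, hone, Fin.val_mk, Nat.mod_eq_of_lt (by omega)]
      omega
    have e2 : (⟨(j : ℕ) - 1, by omega⟩ : Fin n) + 1 = j := by
      apply Fin.ext
      simp only [Fin.val_add, hone, Fin.val_mk]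
      rw [Nat.mod_eq_of_lt (by omega)]
      omega
    rw [← e1, ← e2]
    apply stepB2
    apply baseB2
    · show (n - 2) + 1 < n; omega
    · show ((j : ℕ) - 1) + 1 < n; have := j.isLt; omega
    · show (n - 2) ≠ ((j : ℕ) - 1) + 1; omega
    · show ((j : ℕ) - 1) ≠ (n - 2) + 1; have := j.isLt; omega
  have B2 : ∀ i j : Fin n, i - j ≠ 1 → j - i ≠ 1 → b i * b j = b j * b i := by
    intro i j hij hji
    by_cases hi : (i : ℕ) + 1 < n
    · by_cases hj : (j : ℕ) + 1 < n
      · apply baseB2 i j hi hj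
        · intro h
          apply hij
          have hji' : j + 1 = i := by
            apply Fin.ext
            rw [Fin.val_add, hone, Nat.mod_eq_of_lt (by omega)]
            omega
          rw [← hji', add_sub_cancel_left]
        · intro h
          apply hji
          have hij' : i + 1 = j := by
            apply Fin.ext
            rw [Fin.val_add, hone, Nat.mod_eq_of_lt (by omega)]
            omega
          rw [← hij', add_sub_cancel_left]
      · have hj' : (j : ℕ) = n - 1 := by have := j.isLt; omega
        exact (mainB2 j i hj' hi hji hij).symm
    · have hi' : (i : ℕ) = n - 1 := by have := i.isLt; omega
      by_cases hj : (j : ℕ) + 1 < n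
      · exact mainB2 i j hi' hj hij hji
      · have hj' : (j : ℕ) = n - 1 := by have := j.isLt; omega
        have hijeq : i = j := Fin.ext (by omega)
        subst hijeq
        rfl
  refine ⟨B1, B2, ?_, ?_⟩
  · intro i
    rw [hτdef, smul_mul_assoc, hshiftb i, mul_smul_comm]
  · rw [hτdef, smul_pow, hd, hγc, smul_smul, inv_mul_cancel₀ hc, one_smul]
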